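/- Let m ≥ 2, n = 2^m − 1, and let r be a positive integer with (r+1) | n. Let C be the binary cyclic code of length n with defining set of exponents Z = {j(r+1) : j = 0, 1, …, n/(r+1) − 1} ∪ [1] ∪ [n−1], where [1] and [n−1] are the 2-cyclotomic cosets of 1 and n−1 modulo n. Then C is an LCD code, i.e., C ∩ C^⊥ = {0}. -/

import Mathlib

/-- The cyclic code of length `n` with defining set of exponents `Z`:
codewords have entries in the field `K`, and parity checks are computed in
the field `F` via the ring homomorphism `φ`, using powers of `α`. -/
def cyclicCode {K F : Type*} [Field K] [Field F] (φ : K →+* F) (n : ℕ) (α : F)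
    (Z : Set ℕ) : Submodule K (Fin n → K) where
  carrier := {c | ∀ z ∈ Z, ∑ i : Fin n, φ (c i) * α ^ ((i : ℕ) * z) = 0}
  add_mem' := by
    intro a b ha hb z hz
    have h : (∑ i : Fin n, φ ((a + b) i) * α ^ ((i : ℕ) * z))
        = (∑ i : Fin n, φ (a i) * α ^ ((i : ℕ) * z))
          + ∑ i : Fin n, φ (b i) * α ^ ((i : ℕ) * z) := by
      rw [← Finset.sum_add_distrib]
      refine Finset.sum_congr rfl fun i _ => ?_
      simp [add_mul]
    rw [h, ha z hz, hb z hz, add_zero]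
  zero_mem' := by intro z hz; simp
  smul_mem' := by
    intro c a ha z hz
    have h : (∑ i : Fin n, φ ((c • a) i) * α ^ ((i : ℕ) * z))
        = φ c * ∑ i : Fin n, φ (a i) * α ^ ((i : ℕ) * z) := by
      rw [Finset.mul_sum]
      refine Finset.sum_congr rfl fun i _ => ?_
      simp [mul_assoc]
    rw [h, ha z hz, mul_zero]

/-- The dual of a code: all vectors orthogonal to every codeword. -/
def dualCode {K : Type*} [Field K] {n : ℕ} (C : Set (Fin n → K)) : Set (Fin n → K) :=
  {x | ∀ c ∈ C, ∑ i : Fin n, x i * c i = 0}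

/-- A linear code is LCD if its intersection with its dual is `{0}`. -/
def IsLCD {K : Type*} [Field K] {n : ℕ} (C : Submodule K (Fin n → K)) : Prop :=
  (C : Set (Fin n → K)) ∩ dualCode (C : Set (Fin n → K)) = {0}

/-- A code has locality `r` if every coordinate position `i` is recoverable as a fixed
linear combination of at most `r` other coordinate positions, uniformly over all codewords. -/
def HasLocality {K : Type*} [Field K] {n : ℕ} (C : Set (Fin n → K)) (r : ℕ) : Prop :=
  ∀ i : Fin n, ∃ (R : Finset (Fin n)) (lam : Fin n → K),
    i ∉ R ∧ R.card ≤ r ∧ ∀ c ∈ C, c i = ∑ j ∈ R, lam j * c j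

/-- The `q`-cyclotomic coset of `a` modulo `n`:
`[a] = {a·q^j mod n : j = 0, 1, 2, …}` (natural number version). -/
def cycCoset (q n a : ℕ) : Set ℕ := {b | ∃ j : ℕ, b = a * q ^ j % n}


open Finset Polynomial in
private lemma pow_two_pow_idem' {F : Type*} [Field F] (t : F) (h : t ^ 2 = t) (k : ℕ) :
    t ^ 2 ^ k = t := by
  induction k with
  | zero => simp
  | succ k ih => rw [pow_succ, pow_mul, ih, h]

open Finset Polynomial in
private lemma trace_exists' {F : Type*} [Field F] [Fintype F] [CharP F 2] (m : ℕ) (hm : 1 ≤ m)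
    (hcard : Fintype.card F = 2 ^ m) :
    ∃ y : F, ∑ j ∈ range m, y ^ 2 ^ j ≠ 0 := by
  by_contra h
  push_neg at h
  set P : F[X] := ∑ j ∈ range m, X ^ 2 ^ j with hP
  have hPeval : ∀ y : F, P.eval y = 0 := by
    intro y
    rw [hP, eval_finset_sum]
    simpa using h y
  have hPdeg : P.natDegree < Fintype.card F := by
    rw [hcard]
    refine lt_of_le_of_lt (Polynomial.natDegree_sum_le_of_forall_le _ _ fun j hj => ?_)
      (show 2 ^ (m - 1) < 2 ^ m from Nat.pow_lt_pow_right one_lt_two (by omega))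
    rw [natDegree_X_pow]
    exact Nat.pow_le_pow_right (by norm_num) (by simp at hj; omega)
  have hP0 : P = 0 := by
    refine Polynomial.eq_zero_of_natDegree_lt_card_of_eval_eq_zero' P Finset.univ
      (fun y _ => hPeval y) ?_
    rwa [Finset.card_univ]
  have hcoeff : P.coeff (2 ^ (m - 1)) = 1 := by
    rw [hP, finset_sum_coeff]
    have : ∀ j ∈ range m, (X ^ 2 ^ j : F[X]).coeff (2 ^ (m - 1)) =
        if m - 1 = j then 1 else 0 := by
      intro j hj
      rw [coeff_X_pow]
      congr 1
      simp only [eq_iff_iff]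
      constructor
      · intro he; exact Nat.pow_right_injective le_rfl he
      · intro he; rw [he]
    rw [Finset.sum_congr rfl this, Finset.sum_ite_eq]
    simp [Nat.sub_lt (by omega : 0 < m) one_pos, show m - 1 < m by omega]
  rw [hP0] at hcoeff
  simp at hcoeff

open Finset in
private lemma trace_sq' {F : Type*} [Field F] [Fintype F] [CharP F 2] (m : ℕ)
    (hcard : Fintype.card F = 2 ^ m) (t : F) :
    (∑ j ∈ range m, t ^ 2 ^ j) ^ 2 = ∑ j ∈ range m, t ^ 2 ^ j := by
  have h2 : (∑ j ∈ range m, t ^ 2 ^ j) ^ 2 = ∑ j ∈ range m, t ^ 2 ^ (j + 1) := by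
    rw [sum_pow_char 2]
    exact Finset.sum_congr rfl fun j _ => by rw [← pow_mul, ← pow_succ]
  have h3 := Finset.sum_range_succ' (fun j => t ^ 2 ^ j) m
  have h4 := Finset.sum_range_succ (fun j => t ^ 2 ^ j) m
  have h5 : t ^ 2 ^ m = t := by rw [← hcard]; exact FiniteField.pow_card t
  rw [h2]
  have := h3.symm.trans h4
  simp only [pow_zero, pow_one, h5] at this
  exact add_right_cancel this

open Finset in
private lemma geom_zero' {F : Type*} [Field F] (n : ℕ) (γ : F) (hγn : γ ^ n = 1) (hγ : γ ≠ 1) :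
    ∑ i ∈ range n, γ ^ i = 0 := by
  rw [geom_sum_eq hγ, hγn, sub_self, zero_div]

section Zlem
variable (m n r : ℕ)

private lemma n_pos' (hm : 2 ≤ m) (hn : n = 2 ^ m - 1) : 3 ≤ n := by
  have : (4:ℕ) ≤ 2 ^ m := by calc (4:ℕ) = 2 ^ 2 := rfl
                                 _ ≤ 2 ^ m := Nat.pow_le_pow_right (by norm_num) hm
  omega

private lemma Zlt' (hm : 2 ≤ m) (hn : n = 2 ^ m - 1) (hrn : r + 1 ∣ n) :
    ∀ z ∈ ({z | ∃ j < n / (r + 1), z = j * (r + 1)} ∪ cycCoset 2 n 1 ∪ cycCoset 2 n (n - 1)),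
    z < n := by
  have hn0 : 0 < n := by have := n_pos' m n hm hn; omega
  rintro z ((⟨j, hj, rfl⟩ | ⟨j, rfl⟩) | ⟨j, rfl⟩)
  · have := (Nat.lt_div_iff_mul_lt' hrn j).mp hj
    rwa [mul_comm] at this
  · exact Nat.mod_lt _ hn0
  · exact Nat.mod_lt _ hn0

private lemma Zneg' (hm : 2 ≤ m) (hn : n = 2 ^ m - 1) (hrn : r + 1 ∣ n) :
    ∀ z ∈ ({z | ∃ j < n / (r + 1), z = j * (r + 1)} ∪ cycCoset 2 n 1 ∪ cycCoset 2 n (n - 1)),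
    ∀ k, ((n - z) * 2 ^ k) % n ∈
      ({z | ∃ j < n / (r + 1), z = j * (r + 1)} ∪ cycCoset 2 n 1 ∪ cycCoset 2 n (n - 1)) := by
  have hn0 : 0 < n := by have := n_pos' m n hm hn; omega
  have hn1 : 1 ≤ n := hn0
  rintro z ((⟨j, hj, rfl⟩ | ⟨j, rfl⟩) | ⟨j, rfl⟩) k
  · left; left
    set b := ((n - j * (r + 1)) * 2 ^ k) % n with hb
    have hd : (r + 1) ∣ b := by
      rw [hb]
      exact (Nat.dvd_mod_iff hrn).mpr (Dvd.dvd.mul_right (Nat.dvd_sub hrn ⟨j, mul_comm _ _⟩) _)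
    refine ⟨b / (r + 1), ?_, (Nat.div_mul_cancel hd).symm⟩
    rw [Nat.lt_div_iff_mul_lt' hrn, Nat.mul_div_cancel' hd]
    exact Nat.mod_lt _ hn0
  · right
    refine ⟨j + k, ?_⟩
    have h1 : (((n - 1 * 2 ^ j % n) * 2 ^ k : ℕ) : ZMod n) = (((n - 1) * 2 ^ (j + k) : ℕ) : ZMod n) := by
      rw [Nat.cast_mul, Nat.cast_mul, Nat.cast_sub (le_of_lt (Nat.mod_lt _ hn0)),
        Nat.cast_sub hn1, ZMod.natCast_mod, ZMod.natCast_self, Nat.cast_mul,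
        Nat.cast_pow, Nat.cast_pow, Nat.cast_pow, pow_add]
      push_cast
      ring
    exact (ZMod.natCast_eq_natCast_iff' _ _ n).mp h1
  · left; right
    refine ⟨j + k, ?_⟩
    have h1 : (((n - (n - 1) * 2 ^ j % n) * 2 ^ k : ℕ) : ZMod n) = ((1 * 2 ^ (j + k) : ℕ) : ZMod n) := by
      rw [Nat.cast_mul, Nat.cast_sub (le_of_lt (Nat.mod_lt _ hn0)), ZMod.natCast_mod,
        ZMod.natCast_self, Nat.cast_mul, Nat.cast_sub hn1, ZMod.natCast_self, Nat.cast_mul,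
        Nat.cast_pow, Nat.cast_pow, Nat.cast_pow, pow_add]
      push_cast
      ring
    exact (ZMod.natCast_eq_natCast_iff' _ _ n).mp h1

private lemma Zkey' (hm : 2 ≤ m) (hn : n = 2 ^ m - 1) (hrn : r + 1 ∣ n)
    (u : ℕ) (hu : u < n)
    (huZ : u ∉ ({z | ∃ j < n / (r + 1), z = j * (r + 1)} ∪ cycCoset 2 n 1 ∪ cycCoset 2 n (n - 1)))
    (z : ℕ)
    (hz : z ∈ ({z | ∃ j < n / (r + 1), z = j * (r + 1)} ∪ cycCoset 2 n 1 ∪ cycCoset 2 n (n - 1)))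
    (j : ℕ) : ¬ (n ∣ u * 2 ^ j + z) := by
  intro hdvd
  have hn0 : 0 < n := by have := n_pos' m n hm hn; omega
  haveI : NeZero n := ⟨hn0.ne'⟩
  have hzlt : z < n := Zlt' m n r hm hn hrn z hz
  apply huZ
  have hcast : ((u * 2 ^ j + z : ℕ) : ZMod n) = 0 :=
    (ZMod.natCast_eq_zero_iff _ n).mpr hdvd
  have h2m : ((2 : ZMod n)) ^ m = 1 := by
    have h2m' : (2:ℕ) ^ m = n + 1 := by
      have := Nat.one_le_two_pow (n := m); omega
    calc ((2 : ZMod n)) ^ m = (((2:ℕ) ^ m : ℕ) : ZMod n) := by push_cast; ring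
    _ = ((n + 1 : ℕ) : ZMod n) := by rw [h2m']
    _ = 1 := by push_cast [ZMod.natCast_self]; ring
  have hueq : ((u : ℕ) : ZMod n) = (((n - z) * 2 ^ (j * (m - 1)) : ℕ) : ZMod n) := by
    have h1 : ((u : ZMod n)) * 2 ^ j = ((n : ZMod n) - z) := by
      push_cast at hcast
      rw [ZMod.natCast_self]
      linear_combination hcast
    have hjm : j + j * (m - 1) = j * m := by
      obtain ⟨m', rfl⟩ : ∃ m', m = m' + 1 := ⟨m - 1, by omega⟩
      simp [Nat.mul_succ, Nat.mul_comm]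
      ring
    calc ((u : ℕ) : ZMod n) = (u : ZMod n) * ((2 : ZMod n) ^ m) ^ j := by rw [h2m]; ring
    _ = (u : ZMod n) * 2 ^ (j + j * (m - 1)) := by rw [← pow_mul, hjm, mul_comm j m, pow_mul]
    _ = ((u : ZMod n) * 2 ^ j) * 2 ^ (j * (m - 1)) := by rw [pow_add]; ring
    _ = ((n : ZMod n) - z) * 2 ^ (j * (m - 1)) := by rw [h1]
    _ = (((n - z) * 2 ^ (j * (m - 1)) : ℕ) : ZMod n) := by
        rw [Nat.cast_mul, Nat.cast_sub (le_of_lt hzlt), Nat.cast_pow]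
        push_cast
        ring
  have heq := (ZMod.natCast_eq_natCast_iff' _ _ n).mp hueq
  rw [Nat.mod_eq_of_lt hu] at heq
  rw [heq]
  exact Zneg' m n r hm hn hrn z hz _

end Zlem

/-- Construction 2: the binary cyclic code of length `n = 2^m − 1` with defining set of
exponents `{j(r+1) : j = 0, …, n/(r+1) − 1} ∪ [1] ∪ [n−1]` is an LCD code. -/
theorem stmt6 (m : ℕ) (hm : 2 ≤ m) (n : ℕ) (hn : n = 2 ^ m - 1)
    (F : Type*) [Field F] [Fintype F] [CharP F 2] (hcard : Fintype.card F = 2 ^ m)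
    (α : F) (hα : orderOf α = n)
    (r : ℕ) (hr : 0 < r) (hrn : r + 1 ∣ n) :
    IsLCD (cyclicCode (ZMod.castHom (dvd_refl 2) F) n α
      ({z | ∃ j < n / (r + 1), z = j * (r + 1)} ∪ cycCoset 2 n 1 ∪ cycCoset 2 n (n - 1))) := by
  classical
  have hn3 : 3 ≤ n := n_pos' m n hm hn
  have hn0 : 0 < n := by omega
  set φ := ZMod.castHom (dvd_refl 2) F with hφdef
  set Z : Set ℕ :=
    {z | ∃ j < n / (r + 1), z = j * (r + 1)} ∪ cycCoset 2 n 1 ∪ cycCoset 2 n (n - 1) with hZdef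
  have hαn : α ^ n = 1 := by rw [← hα]; exact pow_orderOf_eq_one α
  have hord : ∀ k : ℕ, α ^ k = 1 ↔ n ∣ k := fun k => by
    rw [← hα]; exact orderOf_dvd_iff_pow_eq_one.symm
  have hnF : (n : F) = 1 := by
    have h2 : ((2:ℕ) : F) = 0 := CharP.cast_eq_zero F 2
    have h2m : ((2 ^ m : ℕ) : F) = 0 := by
      rw [Nat.cast_pow, h2]; exact zero_pow (by omega)
    calc (n : F) = ((2 ^ m - 1 : ℕ) : F) := by rw [hn]
    _ = ((2 ^ m : ℕ) : F) - 1 := by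
        rw [Nat.cast_sub Nat.one_le_two_pow, Nat.cast_one]
    _ = 0 - 1 := by rw [h2m]
    _ = 1 := by rw [zero_sub, CharTwo.neg_eq]
  unfold IsLCD
  apply Set.eq_of_subset_of_subset
  · rintro x ⟨hxC, hxD⟩
    have hC : ∀ z ∈ Z, ∑ i : Fin n, φ (x i) * α ^ ((i:ℕ) * z) = 0 := hxC
    have hD : ∀ c ∈ (cyclicCode φ n α Z : Set (Fin n → ZMod 2)),
        ∑ i : Fin n, x i * c i = 0 := hxD
    set S : ℕ → F := fun u => ∑ i : Fin n, φ (x i) * α ^ ((i:ℕ) * u) with hSdef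
    have hidem : ∀ t : ZMod 2, t ^ 2 = t := by decide
    have hφidem : ∀ i, φ (x i) ^ 2 = φ (x i) := fun i => by rw [← map_pow, hidem]
    have hSpow : ∀ u k : ℕ, S (u * 2 ^ k) = (S u) ^ 2 ^ k := by
      intro u k
      rw [hSdef]
      simp only
      rw [sum_pow_char_pow 2 k]
      refine Finset.sum_congr rfl fun i _ => ?_
      rw [mul_pow, pow_two_pow_idem' _ (hφidem i), ← pow_mul, Nat.mul_assoc]
    have hSnot : ∀ u : ℕ, u < n → u ∉ Z → S u = 0 := by
      intro u hun huZ
      by_contra hs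
      obtain ⟨y, hy⟩ := trace_exists' m (by omega) hcard
      set T : F → F := fun t => ∑ j ∈ Finset.range m, t ^ 2 ^ j with hTdef
      have hT01 : ∀ t, T t = 0 ∨ T t = 1 := by
        intro t
        have h2 : T t ^ 2 = T t := trace_sq' m hcard t
        have hmul : T t * (T t - 1) = 0 := by linear_combination h2
        rcases mul_eq_zero.mp hmul with h | h
        · exact Or.inl h
        · exact Or.inr (by linear_combination h)
      set β := y * (S u)⁻¹ with hβ
      set c : Fin n → ZMod 2 := fun i => if T (β * α ^ ((i:ℕ) * u)) = 0 then 0 else 1 with hc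
      have hφc : ∀ i, φ (c i) = T (β * α ^ ((i:ℕ) * u)) := by
        intro i
        by_cases h : T (β * α ^ ((i:ℕ) * u)) = 0
        · simp [hc, h]
        · have h1 : T (β * α ^ ((i:ℕ) * u)) = 1 := (hT01 _).resolve_left h
          simp [hc, h, h1]
      have hcC : c ∈ cyclicCode φ n α Z := by
        show ∀ z ∈ Z, ∑ i : Fin n, φ (c i) * α ^ ((i:ℕ) * z) = 0
        intro z hz
        have hne : ∀ jj : ℕ, α ^ (u * 2 ^ jj + z) ≠ 1 := by
          intro jj h1
          exact Zkey' m n r hm hn hrn u hun huZ z hz jj ((hord _).mp h1)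
        calc ∑ i : Fin n, φ (c i) * α ^ ((i:ℕ) * z)
            = ∑ i : Fin n, ∑ jj ∈ Finset.range m, β ^ 2 ^ jj * (α ^ (u * 2 ^ jj + z)) ^ (i:ℕ) := by
              refine Finset.sum_congr rfl fun i _ => ?_
              rw [hφc i, hTdef]
              simp only
              rw [Finset.sum_mul]
              refine Finset.sum_congr rfl fun jj _ => ?_
              rw [mul_pow, ← pow_mul, mul_assoc, ← pow_add, ← pow_mul]
              congr 2
              ring
        _ = ∑ jj ∈ Finset.range m, β ^ 2 ^ jj * ∑ i : Fin n, (α ^ (u * 2 ^ jj + z)) ^ (i:ℕ) := by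
              rw [Finset.sum_comm]
              exact Finset.sum_congr rfl fun jj _ => (Finset.mul_sum _ _ _).symm
        _ = 0 := by
              refine Finset.sum_eq_zero fun jj _ => ?_
              have hz0 : ∑ i : Fin n, (α ^ (u * 2 ^ jj + z)) ^ (i:ℕ) = 0 := by
                rw [Fin.sum_univ_eq_sum_range (fun i => (α ^ (u * 2 ^ jj + z)) ^ i) n]
                exact geom_zero' n _
                  (by rw [← pow_mul, mul_comm, pow_mul, hαn, one_pow]) (hne jj)
              rw [hz0, mul_zero]
      have horthZ : ∑ i : Fin n, x i * c i = 0 := hD c hcC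
      have horth : ∑ i : Fin n, φ (x i) * T (β * α ^ ((i:ℕ) * u)) = 0 := by
        have hφ0 := congrArg φ horthZ
        rw [map_sum] at hφ0
        simp only [map_mul, map_zero] at hφ0
        calc ∑ i : Fin n, φ (x i) * T (β * α ^ ((i:ℕ) * u))
            = ∑ i : Fin n, φ (x i) * φ (c i) :=
              Finset.sum_congr rfl fun i _ => by rw [hφc]
        _ = 0 := hφ0
      have hTfin : T (β * S u) = 0 := by
        calc T (β * S u) = ∑ jj ∈ Finset.range m, β ^ 2 ^ jj * (S u) ^ 2 ^ jj := by
              rw [hTdef]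
              exact Finset.sum_congr rfl fun jj _ => mul_pow _ _ _
        _ = ∑ jj ∈ Finset.range m, β ^ 2 ^ jj * S (u * 2 ^ jj) := by
              refine Finset.sum_congr rfl fun jj _ => ?_
              rw [hSpow]
        _ = ∑ jj ∈ Finset.range m, ∑ i : Fin n, φ (x i) * (β * α ^ ((i:ℕ) * u)) ^ 2 ^ jj := by
              refine Finset.sum_congr rfl fun jj _ => ?_
              rw [hSdef]
              simp only
              rw [Finset.mul_sum]
              refine Finset.sum_congr rfl fun i _ => ?_
              rw [mul_pow β, ← pow_mul α, ← Nat.mul_assoc]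
              ring
        _ = ∑ i : Fin n, φ (x i) * T (β * α ^ ((i:ℕ) * u)) := by
              rw [Finset.sum_comm]
              refine Finset.sum_congr rfl fun i _ => ?_
              rw [hTdef]
              simp only
              rw [Finset.mul_sum]
        _ = 0 := horth
      have hβS : β * S u = y := by
        rw [hβ]
        field_simp
      rw [hβS] at hTfin
      simp only [hTdef] at hTfin
      exact hy hTfin
    have hSall : ∀ u : Fin n, S (u : ℕ) = 0 := by
      intro u
      by_cases h : (u : ℕ) ∈ Z
      · exact hC _ h
      · exact hSnot _ u.isLt h
    rw [Set.mem_singleton_iff]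
    funext w
    have hφxw : φ (x w) = 0 := by
      have hE : ∑ u : Fin n, S (u:ℕ) * α ^ ((u:ℕ) * (n - (w:ℕ))) = 0 :=
        Finset.sum_eq_zero fun u _ => by rw [hSall u, zero_mul]
      have hE2 : ∑ u : Fin n, S (u:ℕ) * α ^ ((u:ℕ) * (n - (w:ℕ)))
          = ∑ i : Fin n, φ (x i) * ∑ u : Fin n, (α ^ ((i:ℕ) + (n - (w:ℕ)))) ^ (u:ℕ) := by
        calc ∑ u : Fin n, S (u:ℕ) * α ^ ((u:ℕ) * (n - (w:ℕ)))
            = ∑ u : Fin n, ∑ i : Fin n, φ (x i) * (α ^ ((i:ℕ) + (n - (w:ℕ)))) ^ (u:ℕ) := by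
              refine Finset.sum_congr rfl fun u _ => ?_
              rw [hSdef]
              simp only
              rw [Finset.sum_mul]
              refine Finset.sum_congr rfl fun i _ => ?_
              rw [mul_assoc, ← pow_add, ← pow_mul]
              congr 2
              ring
        _ = ∑ i : Fin n, ∑ u : Fin n, φ (x i) * (α ^ ((i:ℕ) + (n - (w:ℕ)))) ^ (u:ℕ) :=
              Finset.sum_comm
        _ = ∑ i : Fin n, φ (x i) * ∑ u : Fin n, (α ^ ((i:ℕ) + (n - (w:ℕ)))) ^ (u:ℕ) :=
              Finset.sum_congr rfl fun i _ => (Finset.mul_sum _ _ _).symm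
      have hE3 : ∑ i : Fin n, φ (x i) * ∑ u : Fin n, (α ^ ((i:ℕ) + (n - (w:ℕ)))) ^ (u:ℕ)
          = φ (x w) := by
        rw [Finset.sum_eq_single w]
        · have hwn : (w:ℕ) + (n - (w:ℕ)) = n := Nat.add_sub_cancel' (le_of_lt w.isLt)
          rw [hwn, hαn]
          simp [hnF]
        · intro i _ hiw
          have hne : α ^ ((i:ℕ) + (n - (w:ℕ))) ≠ 1 := by
            intro h1
            have hd := (hord _).mp h1
            have hi := i.isLt
            have hw := w.isLt
            have hpos : 0 < (i:ℕ) + (n - (w:ℕ)) := by omega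
            have hlt : (i:ℕ) + (n - (w:ℕ)) < 2 * n := by omega
            rcases hd with ⟨t, ht⟩
            have ht1 : t = 1 := by
              rcases t with _ | _ | t
              · omega
              · rfl
              · exfalso
                have h2n : 2 * n ≤ n * (t + 1 + 1) := by nlinarith
                omega
            rw [ht1, mul_one] at ht
            exact hiw (Fin.ext (by omega))
          have hz0 : ∑ u : Fin n, (α ^ ((i:ℕ) + (n - (w:ℕ)))) ^ (u:ℕ) = 0 := by
            rw [Fin.sum_univ_eq_sum_range (fun u => (α ^ ((i:ℕ) + (n - (w:ℕ)))) ^ u) n]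
            exact geom_zero' n _
              (by rw [← pow_mul, mul_comm, pow_mul, hαn, one_pow]) hne
          rw [hz0, mul_zero]
        · intro h
          exact absurd (Finset.mem_univ w) h
      rw [← hE3, ← hE2]
      exact hE
    have hinj : Function.Injective φ := φ.injective
    have := hinj (show φ (x w) = φ 0 by rw [hφxw, map_zero])
    simpa using this
  · rintro x hx
    rw [Set.mem_singleton_iff] at hx
    subst hx
    refine ⟨?_, ?_⟩
    · exact Submodule.zero_mem _
    · intro c _
      simp
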